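/- Let U ⊆ ℂ be open, y : U → ℂ holomorphic, x_1 ∈ U, ρ > 0 with the closed disk of radius ρ about x_1 contained in U, and M = max_{t ∈ [0, 2π]} |y(x_1 + ρ e^{it})|. Then for all x_2 with |x_2 − x_1| < ρ, |y(x_1) − y(x_2)| ≤ (M/(ρ(ρ − |x_2 − x_1|))) |x_2 − x_1|^2 + |y'(x_1)| |x_2 − x_1|. -/

import Mathlib

open Real

/-- Quantitative continuity estimate for a holomorphic function:
with `M` the maximum of `‖y‖` on the circle of radius `ρ` about `x₁`, for `‖x₂ − x₁‖ < ρ`,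
`‖y x₁ − y x₂‖ ≤ (M/(ρ(ρ − ‖x₂ − x₁‖))) ‖x₂ − x₁‖² + ‖y'(x₁)‖ ‖x₂ − x₁‖`. -/
theorem holomorphic_continuity_estimate (U : Set ℂ) (hU : IsOpen U) (y : ℂ → ℂ)
    (hy : DifferentiableOn ℂ y U) (x₁ : ℂ) (ρ : ℝ) (hρ : 0 < ρ)
    (hball : Metric.closedBall x₁ ρ ⊆ U) (M : ℝ)
    (hM : IsGreatest {m : ℝ | ∃ t ∈ Set.Icc (0 : ℝ) (2 * π),
      m = ‖y (x₁ + ρ * Complex.exp (Complex.I * t))‖} M) :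
    ∀ x₂ : ℂ, ‖x₂ - x₁‖ < ρ →
      ‖y x₁ - y x₂‖ ≤ M / (ρ * (ρ - ‖x₂ - x₁‖)) * ‖x₂ - x₁‖ ^ 2 +
        ‖deriv y x₁‖ * ‖x₂ - x₁‖ := by
  intro x₂ hx₂
  set w : ℂ := x₂ - x₁ with hw
  set r : ℝ := ‖w‖ with hrdef
  have hr0 : 0 ≤ r := norm_nonneg _
  have hrρ : r < ρ := hx₂
  have hρ0 : ρ ≠ 0 := hρ.ne'
  have hρr : ρ - r ≠ 0 := by linarith
  set R : NNReal := ⟨ρ, hρ.le⟩ with hR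
  have hRρ : (R : ℝ) = ρ := rfl
  have hd : DifferentiableOn ℂ y (Metric.closedBall x₁ ρ) := hy.mono hball
  have hps : HasFPowerSeriesOnBall y (cauchyPowerSeries y x₁ ρ) x₁ R :=
    DifferentiableOn.hasFPowerSeriesOnBall (R := R) hd hρ
  set p : FormalMultilinearSeries ℂ ℂ ℂ := cauchyPowerSeries y x₁ ρ with hp
  set c : ℕ → ℂ := fun n => p.coeff n with hc
  -- the point is inside the ball of convergence
  have hmem : w ∈ Metric.eball (0 : ℂ) R := by
    rw [EMetric.mem_ball, edist_zero_right]
    exact_mod_cast hx₂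
  have hsum0 := hps.hasSum hmem
  have hsum : HasSum (fun n => w ^ n • c n) (y x₂) := by
    have hx : x₁ + w = x₂ := by rw [hw]; ring
    simpa [FormalMultilinearSeries.apply_eq_pow_smul_coeff, hx] using hsum0
  -- value and derivative in terms of coefficients
  have hc0 : c 0 = y x₁ := hps.coeff_zero 1
  have hc1 : c 1 = deriv y x₁ := (hps.hasFPowerSeriesAt.deriv).symm
  -- coefficient bounds (Cauchy estimates)
  have hMnonneg : 0 ≤ M := by
    obtain ⟨t, _, ht⟩ := hM.1
    rw [ht]; exact norm_nonneg _
  have hcont : ContinuousOn (fun θ : ℝ => ‖y (circleMap x₁ ρ θ)‖) (Set.uIcc 0 (2 * π)) := by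
    apply ContinuousOn.norm
    exact hy.continuousOn.comp (continuous_circleMap x₁ ρ).continuousOn
      (fun θ _ => hball (circleMap_mem_closedBall x₁ hρ.le θ))
  have hbd : ∀ θ ∈ Set.Icc (0:ℝ) (2 * π), ‖y (circleMap x₁ ρ θ)‖ ≤ M := by
    intro θ hθ
    apply hM.2
    exact ⟨θ, hθ, by rw [circleMap]; ring_nf⟩
  have hint : (∫ θ in (0:ℝ)..(2 * π), ‖y (circleMap x₁ ρ θ)‖) ≤ 2 * π * M := by
    have h1 : (∫ θ in (0:ℝ)..(2 * π), ‖y (circleMap x₁ ρ θ)‖) ≤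
        ∫ _ in (0:ℝ)..(2 * π), M := by
      apply intervalIntegral.integral_mono_on Real.two_pi_pos.le
      · exact hcont.intervalIntegrable
      · exact intervalIntegrable_const
      · exact hbd
    simpa using h1
  have hcoeff : ∀ n : ℕ, ‖c n‖ ≤ M / ρ ^ n := by
    intro n
    have h1 : ‖c n‖ ≤ ‖p n‖ :=
      (FormalMultilinearSeries.norm_apply_eq_norm_coef (p := p) (n := n)).ge
    have h2 := norm_cauchyPowerSeries_le y x₁ ρ n
    have h3 : ((2 * π)⁻¹ * ∫ θ : ℝ in (0)..(2 * π), ‖y (circleMap x₁ ρ θ)‖) ≤ M := by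
      rw [inv_mul_le_iff₀ Real.two_pi_pos]
      linarith [hint]
    calc ‖c n‖ ≤ ‖p n‖ := h1
      _ ≤ ((2 * π)⁻¹ * ∫ θ : ℝ in (0)..(2 * π), ‖y (circleMap x₁ ρ θ)‖) * |ρ|⁻¹ ^ n := h2
      _ ≤ M * |ρ|⁻¹ ^ n := by
          apply mul_le_mul_of_nonneg_right h3
          positivity
      _ = M / ρ ^ n := by
          rw [abs_of_pos hρ]
          rw [inv_pow, div_eq_mul_inv]
  -- tail sum
  have htail : HasSum (fun n => w ^ (n + 2) • c (n + 2))
      (y x₂ - ∑ i ∈ Finset.range 2, w ^ i • c i) :=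
    (hasSum_nat_add_iff' 2).mpr hsum
  set T : ℂ := y x₂ - ∑ i ∈ Finset.range 2, w ^ i • c i with hT
  have hgeo : HasSum (fun n : ℕ => (M * r ^ 2 / ρ ^ 2) * (r / ρ) ^ n)
      ((M * r ^ 2 / ρ ^ 2) * (1 - r / ρ)⁻¹) := by
    apply HasSum.mul_left
    apply hasSum_geometric_of_lt_one (by positivity)
    rw [div_lt_one hρ]; exact hrρ
  have hTle : ‖T‖ ≤ (M * r ^ 2 / ρ ^ 2) * (1 - r / ρ)⁻¹ := by
    apply htail.norm_le_of_bounded hgeo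
    intro n
    rw [norm_smul, norm_pow]
    calc r ^ (n + 2) * ‖c (n + 2)‖ ≤ r ^ (n + 2) * (M / ρ ^ (n + 2)) := by
          apply mul_le_mul_of_nonneg_left (hcoeff _) (by positivity)
      _ = M * r ^ 2 / ρ ^ 2 * (r / ρ) ^ n := by
          field_simp
          rw [div_pow, pow_add, pow_add]
          field_simp
  have hTval : (M * r ^ 2 / ρ ^ 2) * (1 - r / ρ)⁻¹ = M / (ρ * (ρ - r)) * r ^ 2 := by
    have h1 : 1 - r / ρ = (ρ - r) / ρ := by field_simp
    rw [h1]
    field_simp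
  -- put everything together
  have hdecomp : y x₁ - y x₂ = -(T + w • c 1) := by
    rw [hT, Finset.sum_range_succ, Finset.sum_range_one]
    simp only [pow_zero, pow_one, one_smul, hc0, smul_eq_mul]
    ring
  calc ‖y x₁ - y x₂‖ = ‖T + w • c 1‖ := by rw [hdecomp, norm_neg]
    _ ≤ ‖T‖ + ‖w • c 1‖ := norm_add_le _ _
    _ = ‖T‖ + ‖deriv y x₁‖ * r := by
        rw [norm_smul, hc1, mul_comm]
    _ ≤ M / (ρ * (ρ - r)) * r ^ 2 + ‖deriv y x₁‖ * r := by
        rw [← hTval]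
        exact add_le_add_left hTle _
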